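/- Every persistence module of length n over a field k in which every vector space V_i is finite-dimensional is isomorphic (as a functor to k-vector spaces) to a finite direct sum of interval modules I[a,b] with 0 ≤ a ≤ b ≤ n. -/

import Mathlib

/-!
STATEMENT 0: Every persistence module of length `n` over a field `k` in which every
vector space `V i` is finite-dimensional is isomorphic (as a functor to `k`-vector
spaces, i.e. via a family of linear equivalences commuting with the structure maps)
to a finite direct sum of interval modules `I[a,b]` with `0 ≤ a ≤ b ≤ n`.
-/

open DirectSum

/-- The `i`-th space of the interval module `I[a,b]`, realized as a submodule of `k`:
it is all of `k` (i.e. `⊤`) for `a ≤ i ≤ b` and the zero submodule otherwise. -/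
def intervalSubmodule (k : Type*) [Field k] (a b i : ℕ) : Submodule k k :=
  if a ≤ i ∧ i ≤ b then ⊤ else ⊥

open Classical in
/-- The structure map of the interval module `I[a,b]` from index `i` to index `j`:
the (identity-like) inclusion whenever it exists, and zero otherwise.  For `j = i + 1`
this is the identity of `k` when `a ≤ i < b` (both spaces being `⊤`) and zero otherwise. -/
noncomputable def intervalStep (k : Type*) [Field k] (a b i j : ℕ) :
    intervalSubmodule k a b i →ₗ[k] intervalSubmodule k a b j :=
  if h : intervalSubmodule k a b i ≤ intervalSubmodule k a b j then Submodule.inclusion h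
  else 0

/-- The direct sum of a family of linear maps, as a map between direct sums. -/
noncomputable def dsumMap {k : Type*} [Field k] {ι : Type*} [DecidableEq ι]
    {M N : ι → Type*} [∀ x, AddCommGroup (M x)] [∀ x, Module k (M x)]
    [∀ x, AddCommGroup (N x)] [∀ x, Module k (N x)]
    (f : ∀ x, M x →ₗ[k] N x) : (⨁ x, M x) →ₗ[k] ⨁ x, N x :=
  DirectSum.toModule k ι _ fun x => (DirectSum.lof k ι N x).comp (f x)


lemma dsumMap_lof {k : Type*} [Field k] {ι : Type*} [DecidableEq ι]
    {M N : ι → Type*} [∀ x, AddCommGroup (M x)] [∀ x, Module k (M x)]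
    [∀ x, AddCommGroup (N x)] [∀ x, Module k (N x)]
    (f : ∀ x, M x →ₗ[k] N x) (x : ι) (w : M x) :
    dsumMap f (DirectSum.lof k ι M x w) = DirectSum.lof k ι N x (f x w) := by
  rw [dsumMap]
  exact DirectSum.toModule_lof k x w


open Submodule

section GE
variable {k M N : Type*} {ι : Type*} [Field k] [AddCommGroup M] [Module k M]
  [AddCommGroup N] [Module k N]

lemma span_range_restrict_eq (p : ι → Prop) (v : ι → M) (h : ∀ x, ¬ p x → v x = 0) :
    span k (Set.range fun s : {x // p x} => v s.1) = span k (Set.range v) := by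
  apply le_antisymm
  · exact span_mono (by rintro _ ⟨s, rfl⟩; exact ⟨s.1, rfl⟩)
  · rw [span_le]
    rintro _ ⟨x, rfl⟩
    by_cases hx : p x
    · exact subset_span ⟨⟨x, hx⟩, rfl⟩
    · rw [h x hx]; exact zero_mem _

/-- Gaussian elimination. -/
lemma gauss_elim (f : M →ₗ[k] N) : ∀ (m : ℕ) (v : Fin m → M),
    ∃ u : Fin m → M,
      (∀ j, u j - v j ∈ span k (v '' {j' | j' < j})) ∧
      (∀ t : Fin m → k, ∑ j, t j • f (u j) = 0 → ∀ j, f (u j) ≠ 0 → t j = 0) := by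
  intro m
  induction m with
  | zero => exact fun v => ⟨v, fun j => j.elim0, fun t _ j => j.elim0⟩
  | succ m ih =>
    intro v
    obtain ⟨u', hT, hI⟩ := ih (v ∘ Fin.castSucc)
    have hTcast : ∀ (w : M) (j : Fin m), u' j - v (Fin.castSucc j) ∈
        span k (v '' {j' | j' < Fin.castSucc j}) := by
      intro w j
      refine (span_mono ?_) (hT j)
      rintro _ ⟨j', hj', rfl⟩
      exact ⟨Fin.castSucc j', by exact_mod_cast Fin.castSucc_lt_castSucc_iff.2 hj', rfl⟩
    have husub : ∀ j : Fin m, u' j ∈ span k (v '' {j' | j' < Fin.last m}) := by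
      intro j
      have h1 := hTcast 0 j
      have h2 : (v '' {j' | j' < Fin.castSucc j}) ⊆ v '' {j' | j' < Fin.last m} := by
        rintro _ ⟨j', hj', rfl⟩
        exact ⟨j', lt_of_lt_of_le hj' (Fin.le_last _), rfl⟩
      have h3 : v (Fin.castSucc j) ∈ span k (v '' {j' | j' < Fin.last m}) :=
        subset_span ⟨Fin.castSucc j, Fin.castSucc_lt_last j, rfl⟩
      have := add_mem ((span_mono h2) h1) h3
      simpa using this
    have hrange : (Set.range fun j => f (u' j)) = f '' Set.range u' := by
      ext y; constructor
      · rintro ⟨j, rfl⟩; exact ⟨u' j, ⟨j, rfl⟩, rfl⟩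
      · rintro ⟨z, ⟨j, rfl⟩, rfl⟩; exact ⟨j, rfl⟩
    by_cases hc : f (v (Fin.last m)) ∈ span k (Set.range fun j => f (u' j))
    · -- can kill the new vector
      rw [hrange, ← Submodule.map_span] at hc
      obtain ⟨z, hz, hfz⟩ := hc
      refine ⟨Fin.snoc u' (v (Fin.last m) - z), ?_, ?_⟩
      · intro j
        refine Fin.lastCases ?_ ?_ j
        · simp only [Fin.snoc_last]
          have heq : v (Fin.last m) - z - v (Fin.last m) = -z := by abel
          rw [heq]
          refine neg_mem ?_
          refine (span_le.2 ?_) hz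
          rintro _ ⟨j, rfl⟩
          exact husub j
        · intro j
          simp only [Fin.snoc_castSucc]
          exact hTcast 0 j
      · intro t hsum j
        have hlast : f (v (Fin.last m) - z) = 0 := by simp [map_sub, hfz]
        rw [Fin.sum_univ_castSucc] at hsum
        simp only [Fin.snoc_castSucc, Fin.snoc_last, hlast, smul_zero, add_zero] at hsum
        refine Fin.lastCases ?_ ?_ j
        · simp only [Fin.snoc_last, hlast, ne_eq, not_true_eq_false, IsEmpty.forall_iff,
            forall_const]
        · intro i
          simp only [Fin.snoc_castSucc]
          exact hI (fun j' => t (Fin.castSucc j')) hsum i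
    · -- keep the new vector
      refine ⟨Fin.snoc u' (v (Fin.last m)), ?_, ?_⟩
      · intro j
        refine Fin.lastCases ?_ ?_ j
        · simp only [Fin.snoc_last, sub_self]; exact zero_mem _
        · intro j
          simp only [Fin.snoc_castSucc]
          exact hTcast 0 j
      · intro t hsum
        rw [Fin.sum_univ_castSucc] at hsum
        simp only [Fin.snoc_castSucc, Fin.snoc_last] at hsum
        have htlast : t (Fin.last m) = 0 := by
          by_contra h0
          apply hc
          have h1 : t (Fin.last m) • f (v (Fin.last m)) =
              -∑ j, t (Fin.castSucc j) • f (u' j) := by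
            rw [eq_neg_iff_add_eq_zero, add_comm]; exact hsum
          have h2 : f (v (Fin.last m)) =
              (t (Fin.last m))⁻¹ • (t (Fin.last m) • f (v (Fin.last m))) := by
            rw [← mul_smul, inv_mul_cancel₀ h0, one_smul]
          rw [h2, h1]
          refine smul_mem _ _ (neg_mem (sum_mem fun j _ => smul_mem _ _ (subset_span ⟨j, rfl⟩)))
        rw [htlast, zero_smul, add_zero] at hsum
        intro j
        refine Fin.lastCases ?_ ?_ j
        · intro _; exact htlast
        · intro i
          simp only [Fin.snoc_castSucc]
          exact hI (fun j' => t (Fin.castSucc j')) hsum i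
end GE

section Aux
variable {k : Type} [Field k] {n : ℕ} {V : Fin (n+1) → Type}
  [∀ i, AddCommGroup (V i)] [∀ i, Module k (V i)] [∀ i, FiniteDimensional k (V i)]
  (φ : ∀ i : Fin n, V i.castSucc →ₗ[k] V i.succ)

/-- statement of the partial decomposition up to level `m`. -/
def AuxStmt (m : ℕ) : Prop :=
  ∃ (ι : Type) (_ : Fintype ι) (a b : ι → ℕ),
    (∀ x, a x ≤ b x) ∧ (∀ x, b x ≤ m) ∧
    ∃ v : ∀ i : Fin (n+1), ι → V i,
      (∀ (i : Fin (n+1)) x, ¬(a x ≤ i.1 ∧ i.1 ≤ b x) → v i x = 0) ∧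
      (∀ i : Fin (n+1), i.1 ≤ m →
        LinearIndependent k (fun s : {x // a x ≤ i.1 ∧ i.1 ≤ b x} => v i s.1)) ∧
      (∀ i : Fin (n+1), i.1 ≤ m → span k (Set.range (v i)) = ⊤) ∧
      (∀ i : Fin n, i.1 < m → ∀ x, a x ≤ i.1 → φ i (v i.castSucc x) = v i.succ x)

lemma aux_base : AuxStmt φ 0 := by
  classical
  set d := Module.finrank k (V 0) with hd
  set bas : Module.Basis (Fin d) k (V 0) := Module.finBasis k (V 0) with hbas
  refine ⟨Fin d, inferInstance, fun _ => 0, fun _ => 0, fun x => le_rfl, fun x => le_rfl,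
    fun i x => if h : i = 0 then h ▸ (bas x) else 0, ?_, ?_, ?_, ?_⟩
  · intro i x hx
    have : i ≠ 0 := by
      rintro rfl
      exact hx ⟨le_rfl, le_rfl⟩
    simp [this]
  · intro i hi
    obtain rfl : i = 0 := by apply Fin.ext; simp only [Fin.val_zero]; omega
    simp only [dif_pos]
    exact bas.linearIndependent.comp _ Subtype.val_injective
  · intro i hi
    obtain rfl : i = 0 := by apply Fin.ext; simp only [Fin.val_zero]; omega
    simp only [dif_pos]
    exact bas.span_eq
  · intro i hi; omega

set_option maxHeartbeats 1000000 in
lemma aux_step (m : ℕ) (hmn : m < n) (h : AuxStmt φ m) : AuxStmt φ (m + 1) := by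
  classical
  obtain ⟨ι, _, a, b, hab, hbm, v, H0, H1, H2, H3⟩ := h
  set Lm : Fin (n+1) := ⟨m, by omega⟩ with hLmdef
  set Lm1 : Fin (n+1) := ⟨m+1, by omega⟩ with hLm1def
  set im : Fin n := ⟨m, hmn⟩ with himdef
  have hcastSucc : im.castSucc = Lm := rfl
  have hsucc : im.succ = Lm1 := rfl
  set f : V Lm →ₗ[k] V Lm1 := φ im with hfdef
  -- the alive-at-m index set
  set A := {x : ι // a x ≤ m ∧ m ≤ b x} with hAdef
  have hsp : ⊤ ≤ span k (Set.range fun s : A => v Lm s.1) := by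
    rw [span_range_restrict_eq (fun x => a x ≤ m ∧ m ≤ b x) (v Lm) (fun x hx => H0 Lm x hx),
      H2 Lm le_rfl]
  set Bm : Module.Basis A k (V Lm) := Module.Basis.mk (H1 Lm le_rfl) hsp with hBmdef
  have hBm_apply : ∀ y : A, Bm y = v Lm y.1 := by
    intro y; rw [hBmdef, Module.Basis.mk_apply]
  -- a monotone enumeration of A
  set mA := Fintype.card A with hmAdef
  set e0 : Fin mA ≃ A := (Fintype.equivFin A).symm with he0def
  set σ : Equiv.Perm (Fin mA) := Tuple.sort (fun j => a (e0 j).1) with hσdef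
  set g : Fin mA ≃ A := σ.trans e0 with hgdef
  have hmono : Monotone (fun j => a (g j).1) := Tuple.monotone_sort (fun j => a (e0 j).1)
  -- gaussian elimination
  obtain ⟨u, hTu, hIu⟩ := gauss_elim f mA (fun j => v Lm (g j).1)
  -- coefficients of the corrected vectors
  set c : A → A → k := fun y x => Bm.repr (u (g.symm x)) y with hcdef
  have hu_span : ∀ x : A, u (g.symm x) ∈ span k (⇑Bm '' (⇑g '' {j' | j' ≤ g.symm x})) := by
    intro x
    have h1 := hTu (g.symm x)
    have himg : ((fun j => v Lm (g j).1) '' {j' | j' < g.symm x}) ⊆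
        ⇑Bm '' (⇑g '' {j' | j' ≤ g.symm x}) := by
      rintro _ ⟨j', hj', rfl⟩
      exact ⟨g j', ⟨j', show j' ≤ g.symm x from le_of_lt hj', rfl⟩, hBm_apply (g j')⟩
    have h2 : v Lm (g (g.symm x)).1 ∈ span k (⇑Bm '' (⇑g '' {j' | j' ≤ g.symm x})) :=
      subset_span ⟨g (g.symm x), ⟨g.symm x, show g.symm x ≤ g.symm x from le_rfl, rfl⟩, hBm_apply (g (g.symm x))⟩
    have := add_mem ((span_mono himg) h1) h2
    simpa using this
  have hsupp : ∀ x y : A, c y x ≠ 0 → g.symm y ≤ g.symm x := by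
    intro x y hcyx
    have hsub := Bm.mem_span_image.1 (hu_span x)
    have hy : y ∈ (Bm.repr (u (g.symm x))).support := Finsupp.mem_support_iff.2 hcyx
    obtain ⟨j', hj', hgj⟩ := hsub hy
    rw [← hgj, Equiv.symm_apply_apply]
    exact hj'
  have hsuppa : ∀ x y : A, c y x ≠ 0 → a y.1 ≤ a x.1 := by
    intro x y hcyx
    have h1 := hsupp x y hcyx
    have := hmono h1
    simpa using this
  have hdiag : ∀ x : A, c x x = 1 := by
    intro x
    have h1 := hTu (g.symm x)
    have himg : ((fun j => v Lm (g j).1) '' {j' | j' < g.symm x}) ⊆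
        ⇑Bm '' (⇑g '' {j' | j' < g.symm x}) := by
      rintro _ ⟨j', hj', rfl⟩
      exact ⟨g j', ⟨j', hj', rfl⟩, hBm_apply (g j')⟩
    have hzero : Bm.repr (u (g.symm x) - v Lm (g (g.symm x)).1) x = 0 := by
      have hsub := Bm.mem_span_image.1 ((span_mono himg) h1)
      by_contra h0
      have : x ∈ (Bm.repr (u (g.symm x) - v Lm (g (g.symm x)).1)).support :=
        Finsupp.mem_support_iff.2 h0
      obtain ⟨j', hj', hgj⟩ := hsub this
      rw [← hgj] at hj'
      simp at hj'
    have hrepr : Bm.repr (v Lm (g (g.symm x)).1) x = 1 := by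
      rw [← hBm_apply (g (g.symm x)), Bm.repr_self, Equiv.apply_symm_apply,
        Finsupp.single_eq_same]
    have : c x x = Bm.repr (v Lm (g (g.symm x)).1) x
        + Bm.repr (u (g.symm x) - v Lm (g (g.symm x)).1) x := by
      rw [hcdef]
      simp only [← Finsupp.add_apply, ← map_add]
      congr 2
      abel
    rw [this, hzero, hrepr, add_zero]
  -- the corrected families at every level
  set w : ∀ i : Fin (n+1), A → V i := fun i x => ∑ y : A, c y x • v i y.1 with hwdef
  have hw_m : ∀ x : A, w Lm x = u (g.symm x) := by
    intro x
    rw [hwdef]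
    have : ∀ y : A, c y x • v Lm y.1 = Bm.repr (u (g.symm x)) y • Bm y := by
      intro y; rw [hBm_apply, hcdef]
    simp only [this]
    exact Bm.sum_repr (u (g.symm x))
  have hw_phi : ∀ i : Fin n, i.1 < m → ∀ x : A, a x.1 ≤ i.1 →
      φ i (w i.castSucc x) = w i.succ x := by
    intro i hi x hax
    rw [hwdef]
    simp only [map_sum, map_smul]
    refine Finset.sum_congr rfl ?_
    intro y _
    by_cases hcy : c y x = 0
    · simp [hcy]
    · rw [H3 i hi y.1 (le_trans (hsuppa x y hcy) hax)]
  -- top-level new vectors and new interval data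
  set F : ι → V Lm1 := fun x => if h : a x ≤ m ∧ m ≤ b x then f (u (g.symm ⟨x, h⟩)) else 0
    with hFdef
  set b' : ι → ℕ := fun x => if F x ≠ 0 then m + 1 else b x with hb'def
  set sPrev : Submodule k (V Lm1) := span k (Set.range fun j : Fin mA => f (u j)) with hsPrevdef
  obtain ⟨C, hC⟩ := Submodule.exists_isCompl sPrev
  set r := Module.finrank k C with hrdef
  set basC : Module.Basis (Fin r) k C := Module.finBasis k C with hbasCdef
  set aS : ι ⊕ Fin r → ℕ := Sum.elim a (fun _ => m+1) with haSdef
  set bS : ι ⊕ Fin r → ℕ := Sum.elim b' (fun _ => m+1) with hbSdef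
  set v' : ∀ i : Fin (n+1), ι ⊕ Fin r → V i := fun i => Sum.elim
    (fun x => if him : i.1 ≤ m then
        (if hbx : a x ≤ m ∧ m ≤ b x then (if a x ≤ i.1 then w i ⟨x, hbx⟩ else 0) else v i x)
      else if hi1 : i = Lm1 then hi1 ▸ F x else 0)
    (fun t => if hi1 : i = Lm1 then hi1 ▸ (basC t : V Lm1) else 0) with hv'def
  have hFx : ∀ (x : ι) (hbx : a x ≤ m ∧ m ≤ b x), F x = f (u (g.symm ⟨x, hbx⟩)) := by
    intro x hbx; rw [hFdef]; exact dif_pos hbx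
  have hFx0 : ∀ (x : ι), ¬(a x ≤ m ∧ m ≤ b x) → F x = 0 := by
    intro x hbx; rw [hFdef]; exact dif_neg hbx
  have hFbx : ∀ x : ι, F x ≠ 0 → a x ≤ m ∧ m ≤ b x := by
    intro x hF
    by_contra hbx
    exact hF (hFx0 x hbx)
  have hv'w : ∀ (i : Fin (n+1)) (him : i.1 ≤ m) (x : ι) (hbx : a x ≤ m ∧ m ≤ b x),
      a x ≤ i.1 → v' i (Sum.inl x) = w i ⟨x, hbx⟩ := by
    intro i him x hbx hax
    simp only [hv'def, Sum.elim_inl, dif_pos him, dif_pos hbx, if_pos hax]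
  have hv'v : ∀ (i : Fin (n+1)) (him : i.1 ≤ m) (x : ι), ¬(a x ≤ m ∧ m ≤ b x) →
      v' i (Sum.inl x) = v i x := by
    intro i him x hbx
    simp only [hv'def, Sum.elim_inl, dif_pos him, dif_neg hbx]
  have hv'0 : ∀ (i : Fin (n+1)) (him : i.1 ≤ m) (x : ι), ¬(a x ≤ i.1) →
      v' i (Sum.inl x) = 0 := by
    intro i him x hax
    simp only [hv'def, Sum.elim_inl, dif_pos him]
    by_cases hbx : a x ≤ m ∧ m ≤ b x
    · rw [dif_pos hbx, if_neg hax]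
    · rw [dif_neg hbx]
      exact H0 i x (fun hc => hax hc.1)
  have hmLm1 : ¬((Lm1 : Fin (n+1)).1 ≤ m) := by simp [hLm1def]
  have hv'F : ∀ x : ι, v' Lm1 (Sum.inl x) = F x := by
    intro x
    simp only [hv'def, Sum.elim_inl, dif_neg hmLm1, dif_pos rfl]
    simp
  have hv'C : ∀ t : Fin r, v' Lm1 (Sum.inr t) = (basC t : V Lm1) := by
    intro t
    simp only [hv'def, Sum.elim_inr, dif_pos rfl]
    simp
  have hv'far : ∀ (i : Fin (n+1)), ¬(i.1 ≤ m) → i ≠ Lm1 → ∀ z, v' i z = 0 := by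
    intro i him hi1 z
    rcases z with x | t
    · simp only [hv'def, Sum.elim_inl, dif_neg him, dif_neg hi1]
    · simp only [hv'def, Sum.elim_inr, dif_neg hi1]
  have hv'inr : ∀ (i : Fin (n+1)) (him : i.1 ≤ m) (t : Fin r), v' i (Sum.inr t) = 0 := by
    intro i him t
    have : i ≠ Lm1 := by
      intro h; rw [h] at him; exact hmLm1 him
    simp only [hv'def, Sum.elim_inr, dif_neg this]
  have hLv : (Lm1 : Fin (n+1)).val = m + 1 := rfl
  -- H0'
  have H0' : ∀ (i : Fin (n+1)) z, ¬(aS z ≤ i.1 ∧ i.1 ≤ bS z) → v' i z = 0 := by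
    intro i z hz
    rcases z with x | t
    · simp only [haSdef, hbSdef, Sum.elim_inl] at hz
      by_cases him : i.1 ≤ m
      · by_cases hax : a x ≤ i.1
        · by_cases hbx : a x ≤ m ∧ m ≤ b x
          · exfalso
            apply hz
            refine ⟨hax, ?_⟩
            rw [hb'def]
            by_cases hF : F x ≠ 0
            · simp only [if_pos hF]; omega
            · simp only [if_neg hF]; omega
          · have hb'x : b' x = b x := by rw [hb'def]; simp [hFx0 x hbx]
            by_cases hib : i.1 ≤ b x
            · exact absurd ⟨hax, hb'x ▸ hib⟩ hz
            · rw [hv'v i him x hbx]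
              exact H0 i x (fun hc => hib hc.2)
        · exact hv'0 i him x hax
      · by_cases hi1 : i = Lm1
        · subst hi1
          rw [hv'F]
          by_contra hF
          apply hz
          have hbx := hFbx x hF
          have : b' x = m + 1 := by rw [hb'def]; simp [hF]
          rw [hLv]
          exact ⟨by omega, by omega⟩
        · exact hv'far i him hi1 _
    · simp only [haSdef, hbSdef, Sum.elim_inr] at hz
      by_cases hi1 : i = Lm1
      · subst hi1
        exact absurd ⟨le_rfl, le_rfl⟩ hz
      · by_cases him : i.1 ≤ m
        · exact hv'inr i him t
        · exact hv'far i him hi1 _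
  -- spanning at low levels
  have hspan' : ∀ (i : Fin (n+1)), i.1 ≤ m → span k (Set.range (v' i)) = ⊤ := by
    intro i him
    have key : ∀ (N : ℕ) (j : Fin mA), j.1 < N → v i (g j).1 ∈ span k (Set.range (v' i)) := by
      intro N
      induction N with
      | zero => intro j hj; exact absurd hj (Nat.not_lt_zero _)
      | succ N IH =>
        intro j hj
        by_cases haj : a (g j).1 ≤ i.1
        · have hv'j : v' i (Sum.inl (g j).1) = w i (g j) := by
            rw [hv'w i him (g j).1 (g j).2 haj]
          have hexp : v i (g j).1 = w i (g j)
              - ∑ y ∈ Finset.univ.erase (g j), c y (g j) • v i y.1 := by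
            have hsum : w i (g j) = c (g j) (g j) • v i (g j).1
                + ∑ y ∈ Finset.univ.erase (g j), c y (g j) • v i y.1 := by
              rw [hwdef]
              exact (Finset.add_sum_erase _ _ (Finset.mem_univ (g j))).symm
            rw [hsum, hdiag, one_smul]
            abel
          rw [hexp]
          refine sub_mem (subset_span ⟨Sum.inl (g j).1, hv'j⟩) (sum_mem ?_)
          intro y hy
          by_cases hcy : c y (g j) = 0
          · rw [hcy, zero_smul]; exact zero_mem _
          · refine smul_mem _ _ ?_
            have hle : g.symm y ≤ j := by
              have := hsupp (g j) y hcy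
              rwa [Equiv.symm_apply_apply] at this
            have hne : g.symm y ≠ j := by
              intro hcontr
              exact absurd (by rw [← hcontr, Equiv.apply_symm_apply])
                (Finset.ne_of_mem_erase hy)
            have hlt : (g.symm y).1 < j.1 := by
              have h1 : (g.symm y).1 ≤ j.1 := hle
              have h2 : (g.symm y).1 ≠ j.1 := fun hc => hne (Fin.ext hc)
              omega
            have := IH (g.symm y) (by omega)
            rwa [Equiv.apply_symm_apply] at this
        · rw [H0 i (g j).1 (fun hc => haj hc.1)]
          exact zero_mem _
    have key2 : ∀ x : ι, v i x ∈ span k (Set.range (v' i)) := by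
      intro x
      by_cases hbx : a x ≤ m ∧ m ≤ b x
      · have := key ((g.symm ⟨x, hbx⟩).1 + 1) (g.symm ⟨x, hbx⟩) (Nat.lt_succ_self _)
        rwa [Equiv.apply_symm_apply] at this
      · by_cases hal : a x ≤ i.1 ∧ i.1 ≤ b x
        · rw [← hv'v i him x hbx]
          exact subset_span ⟨Sum.inl x, rfl⟩
        · rw [H0 i x hal]; exact zero_mem _
    apply le_antisymm le_top
    rw [← H2 i him, span_le]
    rintro _ ⟨x, rfl⟩
    exact key2 x
  -- cardinality at low levels
  have hcardEq : ∀ (i : Fin (n+1)), i.1 ≤ m →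
      Fintype.card {z : ι ⊕ Fin r // aS z ≤ i.1 ∧ i.1 ≤ bS z}
        = Fintype.card {x : ι // a x ≤ i.1 ∧ i.1 ≤ b x} := by
    intro i him
    have e1 := Equiv.subtypeSum (p := fun z : ι ⊕ Fin r => aS z ≤ i.1 ∧ i.1 ≤ bS z)
    have e2 : {x : ι // aS (Sum.inl x) ≤ i.1 ∧ i.1 ≤ bS (Sum.inl x)} ≃
        {x : ι // a x ≤ i.1 ∧ i.1 ≤ b x} := by
      apply Equiv.subtypeEquivRight
      intro x
      simp only [haSdef, hbSdef, Sum.elim_inl]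
      constructor
      · rintro ⟨h1, h2⟩
        refine ⟨h1, ?_⟩
        rw [hb'def] at h2
        by_cases hF : F x ≠ 0
        · have hbx := hFbx x hF
          omega
        · simpa [hF] using h2
      · rintro ⟨h1, h2⟩
        refine ⟨h1, ?_⟩
        rw [hb'def]
        by_cases hF : F x ≠ 0
        · simp only [if_pos hF]; omega
        · simp only [if_neg hF]; exact h2
    have e3 : IsEmpty {t : Fin r // aS (Sum.inr t) ≤ i.1 ∧ i.1 ≤ bS (Sum.inr t)} := by
      constructor
      rintro ⟨t, h1, h2⟩
      simp only [haSdef, Sum.elim_inr] at h1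
      omega
    rw [Fintype.card_congr e1, Fintype.card_sum, Fintype.card_congr e2,
      @Fintype.card_eq_zero _ _ e3, add_zero]
  -- linear independence of the surviving images
  set S := {j : Fin mA // f (u j) ≠ 0} with hSdef
  have li_S : LinearIndependent k (fun s : S => f (u s.1)) := by
    rw [Fintype.linearIndependent_iff]
    intro q hq
    set t : Fin mA → k := fun j => if h : f (u j) ≠ 0 then q ⟨j, h⟩ else 0 with htdef
    have hfil : ∑ j ∈ Finset.univ.filter (fun j => f (u j) ≠ 0), t j • f (u j)
        = ∑ j : Fin mA, t j • f (u j) :=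
      Finset.sum_filter_of_ne (fun j _ hne => fun hf0 => hne (by rw [hf0, smul_zero]))
    have hsub : ∑ j ∈ Finset.univ.filter (fun j => f (u j) ≠ 0), t j • f (u j)
        = ∑ s : S, t s.1 • f (u s.1) :=
      Finset.sum_subtype _ (by simp) _
    have hcongr : ∑ s : S, t s.1 • f (u s.1) = ∑ s : S, q s • f (u s.1) := by
      refine Finset.sum_congr rfl ?_
      intro s _
      rw [htdef]
      simp only [dif_pos s.2]
      rfl
    have hzero : ∑ j : Fin mA, t j • f (u j) = 0 := by
      rw [← hfil, hsub, hcongr, hq]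
    intro s
    have := hIu t hzero s.1 s.2
    rw [htdef] at this
    simpa [dif_pos s.2] using this
  have hsPrev_eq : span k (Set.range fun s : S => f (u s.1)) = sPrev := by
    rw [hsPrevdef]
    exact span_range_restrict_eq (fun j => f (u j) ≠ 0) (fun j => f (u j))
      (fun j hj => not_not.1 hj)
  set BS : Module.Basis S k sPrev := (Module.Basis.span li_S).map (LinearEquiv.ofEq _ _ hsPrev_eq)
    with hBSdef
  have hBS : ∀ s : S, (BS s : V Lm1) = f (u s.1) := by
    intro s
    rw [hBSdef, Module.Basis.map_apply]
    have := Module.Basis.span_apply li_S s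
    simpa using this
  set Btop : Module.Basis (S ⊕ Fin r) k (V Lm1) :=
    (BS.prod basC).map (Submodule.prodEquivOfIsCompl sPrev C hC) with hBtopdef
  have hBtop_inl : ∀ s : S, Btop (Sum.inl s) = f (u s.1) := by
    intro s
    rw [hBtopdef, Module.Basis.map_apply, Module.Basis.prod_apply]
    simp only [Sum.elim_inl, Function.comp_apply, LinearMap.coe_inl]
    rw [Submodule.coe_prodEquivOfIsCompl']
    simp [hBS s]
  have hBtop_inr : ∀ t : Fin r, Btop (Sum.inr t) = (basC t : V Lm1) := by
    intro t
    rw [hBtopdef, Module.Basis.map_apply, Module.Basis.prod_apply]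
    simp only [Sum.elim_inr, Function.comp_apply, LinearMap.coe_inr]
    rw [Submodule.coe_prodEquivOfIsCompl']
    simp
  -- the alive set at level m+1
  have hb'iff : ∀ x : ι, (aS (Sum.inl x) ≤ Lm1.1 ∧ Lm1.1 ≤ bS (Sum.inl x)) ↔ F x ≠ 0 := by
    intro x
    simp only [haSdef, hbSdef, Sum.elim_inl, hLv]
    constructor
    · rintro ⟨h1, h2⟩
      rw [hb'def] at h2
      by_cases hF : F x ≠ 0
      · exact hF
      · simp only [if_neg hF] at h2
        have := hbm x
        omega
    · intro hF
      have hbx := hFbx x hF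
      have hb'x : b' x = m+1 := by rw [hb'def]; simp [hF]
      exact ⟨by omega, by omega⟩
  have hFS : ∀ (x : ι) (hF : F x ≠ 0), f (u (g.symm ⟨x, hFbx x hF⟩)) ≠ 0 := by
    intro x hF
    rw [← hFx x (hFbx x hF)]
    exact hF
  set E1 : {x : ι // aS (Sum.inl x) ≤ Lm1.1 ∧ Lm1.1 ≤ bS (Sum.inl x)} ≃ S :=
    (Equiv.subtypeEquivRight hb'iff).trans
      { toFun := fun z => ⟨g.symm ⟨z.1, hFbx z.1 z.2⟩, hFS z.1 z.2⟩
        invFun := fun s => ⟨(g s.1).1, by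
          have : F (g s.1).1 ≠ 0 := by
            rw [hFx (g s.1).1 (g s.1).2]
            simpa [Subtype.eta, Equiv.symm_apply_apply] using s.2
          exact this⟩
        left_inv := fun z => by
          apply Subtype.ext
          simp
        right_inv := fun s => by
          apply Subtype.ext
          simp } with hE1def
  set E2 : {t : Fin r // aS (Sum.inr t) ≤ Lm1.1 ∧ Lm1.1 ≤ bS (Sum.inr t)} ≃ Fin r :=
    Equiv.subtypeUnivEquiv (fun t => by
      simp only [haSdef, hbSdef, Sum.elim_inr, hLv]
      exact ⟨le_rfl, le_rfl⟩) with hE2def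
  set ELm1 : {z : ι ⊕ Fin r // aS z ≤ Lm1.1 ∧ Lm1.1 ≤ bS z} ≃ S ⊕ Fin r :=
    (Equiv.subtypeSum).trans (Equiv.sumCongr E1 E2) with hEdef
  have hfam : ∀ z : {z : ι ⊕ Fin r // aS z ≤ Lm1.1 ∧ Lm1.1 ≤ bS z},
      v' Lm1 z.1 = Btop (ELm1 z) := by
    rintro ⟨x | t, hz⟩
    · have hred : ELm1 ⟨Sum.inl x, hz⟩ = Sum.inl (E1 ⟨x, hz⟩) := rfl
      rw [hred, hBtop_inl, hv'F]
      rw [hFx x (hFbx x ((hb'iff x).1 hz))]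
      rfl
    · have hred : ELm1 ⟨Sum.inr t, hz⟩ = Sum.inr (E2 ⟨t, hz⟩) := rfl
      rw [hred, hBtop_inr, hv'C]
      rfl
  -- final assembly
  refine ⟨ι ⊕ Fin r, inferInstance, aS, bS, ?_, ?_, v', H0', ?_, ?_, ?_⟩
  · rintro (x | t)
    · simp only [haSdef, hbSdef, Sum.elim_inl, hb'def]
      by_cases hF : F x ≠ 0
      · simp only [if_pos hF]
        have := hFbx x hF
        omega
      · simp only [if_neg hF]
        exact hab x
    · simp [haSdef, hbSdef]
  · rintro (x | t)
    · simp only [hbSdef, Sum.elim_inl, hb'def]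
      by_cases hF : F x ≠ 0
      · simp only [if_pos hF]
        omega
      · simp only [if_neg hF]
        have := hbm x
        omega
    · simp [hbSdef]
  · -- linear independence
    intro i hi
    by_cases him : i.1 ≤ m
    · have htop : ⊤ ≤ span k
          (Set.range fun s : {z : ι ⊕ Fin r // aS z ≤ i.1 ∧ i.1 ≤ bS z} => v' i s.1) := by
        rw [span_range_restrict_eq _ (v' i) (H0' i), hspan' i him]
      have Bi : Module.Basis {x : ι // a x ≤ i.1 ∧ i.1 ≤ b x} k (V i) := Module.Basis.mk (H1 i him) (by
        rw [span_range_restrict_eq _ (v i) (H0 i), H2 i him])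
      have hcards : Fintype.card {z : ι ⊕ Fin r // aS z ≤ i.1 ∧ i.1 ≤ bS z}
          = Module.finrank k (V i) := by
        rw [hcardEq i him, Module.finrank_eq_card_basis Bi]
      have := (basisOfTopLeSpanOfCardEqFinrank _ htop hcards).linearIndependent
      rwa [coe_basisOfTopLeSpanOfCardEqFinrank] at this
    · obtain rfl : i = Lm1 := by
        apply Fin.ext
        rw [hLv]
        omega
      have heqfam : (fun s : {z : ι ⊕ Fin r // aS z ≤ Lm1.1 ∧ Lm1.1 ≤ bS z} => v' Lm1 s.1)
          = (⇑Btop ∘ ⇑ELm1) := funext hfam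
      rw [heqfam]
      exact Btop.linearIndependent.comp ELm1 ELm1.injective
  · -- spanning
    intro i hi
    by_cases him : i.1 ≤ m
    · exact hspan' i him
    · obtain rfl : i = Lm1 := by
        apply Fin.ext
        rw [hLv]
        omega
      rw [← span_range_restrict_eq (fun z => aS z ≤ Lm1.1 ∧ Lm1.1 ≤ bS z) (v' Lm1) (H0' Lm1)]
      have heqfam : (fun s : {z : ι ⊕ Fin r // aS z ≤ Lm1.1 ∧ Lm1.1 ≤ bS z} => v' Lm1 s.1)
          = (⇑Btop ∘ ⇑ELm1) := funext hfam
      rw [heqfam, Set.range_comp, Equiv.range_eq_univ, Set.image_univ, Btop.span_eq]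
  · -- compatibility
    intro i hi z haz
    rcases z with x | t
    · simp only [haSdef, Sum.elim_inl] at haz
      by_cases hii : i.1 < m
      · have hcs : (i.castSucc : ℕ) ≤ m := by simp [Fin.coe_castSucc]; omega
        have hsc : (i.succ : ℕ) ≤ m := by simp [Fin.val_succ]; omega
        by_cases hbx : a x ≤ m ∧ m ≤ b x
        · rw [hv'w i.castSucc hcs x hbx haz,
            hv'w i.succ hsc x hbx (by simp [Fin.val_succ]; omega)]
          exact hw_phi i hii ⟨x, hbx⟩ haz
        · rw [hv'v i.castSucc hcs x hbx, hv'v i.succ hsc x hbx]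
          exact H3 i hii x haz
      · obtain rfl : i = im := by
          apply Fin.ext
          have : (im : ℕ) = m := rfl
          omega
        have hcs : (im.castSucc : ℕ) ≤ m := by simp; exact le_rfl
        by_cases hbx : a x ≤ m ∧ m ≤ b x
        · have h1 : v' im.castSucc (Sum.inl x) = w Lm ⟨x, hbx⟩ :=
            hv'w im.castSucc hcs x hbx haz
          have h2 : v' im.succ (Sum.inl x) = F x := hv'F x
          rw [h1, h2, hFx x hbx]
          have h3 : w Lm ⟨x, hbx⟩ = u (g.symm ⟨x, hbx⟩) := hw_m ⟨x, hbx⟩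
          rw [h3]
        · have h1 : v' im.castSucc (Sum.inl x) = v Lm x := hv'v im.castSucc hcs x hbx
          have h2 : v' im.succ (Sum.inl x) = F x := hv'F x
          rw [h1, h2, hFx0 x hbx]
          have : v Lm x = 0 := H0 Lm x (fun hc => hbx ⟨le_trans haz le_rfl, hc.2⟩)
          rw [this, map_zero]
    · simp only [haSdef, Sum.elim_inr] at haz
      omega



lemma aux (m : ℕ) (hm : m ≤ n) : AuxStmt φ m := by
  induction m with
  | zero => exact aux_base φ
  | succ m IH => exact aux_step φ m (by omega) (IH (by omega))

end Aux

/-- **Interval decomposition** -/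
theorem persistence_module_interval_decomposition
    (k : Type) [Field k] (n : ℕ)
    (V : Fin (n + 1) → Type) [∀ i, AddCommGroup (V i)] [∀ i, Module k (V i)]
    [∀ i, FiniteDimensional k (V i)]
    (φ : ∀ i : Fin n, V i.castSucc →ₗ[k] V i.succ) :
    ∃ (ι : Type) (_ : Fintype ι) (_ : DecidableEq ι) (a b : ι → ℕ),
      (∀ x, a x ≤ b x) ∧ (∀ x, b x ≤ n) ∧
      ∃ e : ∀ i : Fin (n + 1),
          V i ≃ₗ[k] ⨁ x : ι, intervalSubmodule k (a x) (b x) (i : ℕ),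
        ∀ (i : Fin n) (v : V i.castSucc),
          e i.succ (φ i v) =
            dsumMap (fun x => intervalStep k (a x) (b x) (i : ℕ) ((i : ℕ) + 1))
              (e i.castSucc v) := by
  classical
  obtain ⟨ι, _, a, b, hab, hbn, v, H0, H1, H2, H3⟩ := aux φ n le_rfl
  letI : DecidableEq ι := Classical.decEq ι
  have hBspan : ∀ i : Fin (n+1),
      ⊤ ≤ Submodule.span k (Set.range fun s : {x // a x ≤ i.1 ∧ i.1 ≤ b x} => v i s.1) := by
    intro i
    rw [span_range_restrict_eq _ (v i) (H0 i), H2 i (Nat.lt_succ_iff.mp i.isLt)]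
  set B : ∀ i : Fin (n+1), Module.Basis {x // a x ≤ i.1 ∧ i.1 ≤ b x} k (V i) :=
    fun i => Module.Basis.mk (H1 i (Nat.lt_succ_iff.mp i.isLt)) (hBspan i) with hBdef
  have hB_apply : ∀ (i : Fin (n+1)) s, B i s = v i s.1 := by
    intro i s; rw [hBdef]; exact Module.Basis.mk_apply _ _ _
  have hmem1 : ∀ (j : ℕ) (x : ι), a x ≤ j ∧ j ≤ b x →
      (1:k) ∈ intervalSubmodule k (a x) (b x) j := by
    intro j x h
    rw [intervalSubmodule, if_pos h]
    trivial
  set Gm : ∀ i : Fin (n+1), (⨁ x : ι, intervalSubmodule k (a x) (b x) i.1) →ₗ[k] V i :=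
    fun i => DirectSum.toModule k ι _ (fun x =>
      (LinearMap.toSpanSingleton k (V i) (v i x)).comp (Submodule.subtype _)) with hGmdef
  set Fm : ∀ i : Fin (n+1), V i →ₗ[k] (⨁ x : ι, intervalSubmodule k (a x) (b x) i.1) :=
    fun i => (B i).constr k (fun s => DirectSum.lof k ι
      (fun x => intervalSubmodule k (a x) (b x) i.1) s.1 ⟨1, hmem1 i.1 s.1 s.2⟩) with hFmdef
  have hG_lof : ∀ (i : Fin (n+1)) (x : ι) (wz : intervalSubmodule k (a x) (b x) i.1),
      Gm i (DirectSum.lof k ι (fun x => intervalSubmodule k (a x) (b x) i.1) x wz)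
        = (wz : k) • v i x := by
    intro i x wz
    rw [hGmdef]
    rw [DirectSum.toModule_lof]
    rfl
  have hGF : ∀ i, (Gm i).comp (Fm i) = LinearMap.id := by
    intro i
    apply (B i).ext
    intro s
    simp only [LinearMap.comp_apply, LinearMap.id_apply]
    rw [hFmdef, Module.Basis.constr_basis, hG_lof, one_smul, hB_apply]
  have hFG : ∀ i, (Fm i).comp (Gm i) = LinearMap.id := by
    intro i
    refine DirectSum.linearMap_ext _ ?_
    intro x
    apply LinearMap.ext
    intro wz
    simp only [LinearMap.comp_apply, LinearMap.id_apply]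
    rw [hG_lof]
    by_cases h : a x ≤ i.1 ∧ i.1 ≤ b x
    · rw [map_smul]
      rw [show v i x = B i ⟨x, h⟩ from (hB_apply i ⟨x, h⟩).symm]
      rw [hFmdef, Module.Basis.constr_basis, ← map_smul]
      congr 1
      apply Subtype.ext
      simp
    · have hw : wz = 0 := by
        apply Subtype.ext
        have h2 := wz.2
        simp only [intervalSubmodule, if_neg h] at h2
        exact (Submodule.mem_bot k).1 h2
      rw [hw]
      simp
  refine ⟨ι, inferInstance, inferInstance, a, b, hab, hbn,
    fun i => LinearEquiv.ofLinear (Fm i) (Gm i) (hFG i) (hGF i), ?_⟩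
  intro i q
  have hmaps : (Fm i.succ) ∘ₗ (φ i)
      = (dsumMap (fun x => intervalStep k (a x) (b x) ((i.castSucc : Fin (n+1)) : ℕ)
          ((i.succ : Fin (n+1)) : ℕ))) ∘ₗ (Fm i.castSucc) := by
    apply (B i.castSucc).ext
    intro s
    obtain ⟨x, hx⟩ := s
    simp only [LinearMap.comp_apply]
    rw [hB_apply]
    rw [H3 i i.isLt x hx.1]
    rw [show v i.castSucc x = B i.castSucc ⟨x, hx⟩ from (hB_apply i.castSucc ⟨x, hx⟩).symm]
    rw [hFmdef, Module.Basis.constr_basis]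
    rw [dsumMap_lof]
    by_cases hsa : a x ≤ ((i.succ : Fin (n+1)) : ℕ) ∧ ((i.succ : Fin (n+1)) : ℕ) ≤ b x
    · rw [show v i.succ x = B i.succ ⟨x, hsa⟩ from (hB_apply i.succ ⟨x, hsa⟩).symm]
      rw [Module.Basis.constr_basis]
      congr 1
      apply Subtype.ext
      have hle : intervalSubmodule k (a x) (b x) ((i.castSucc : Fin (n+1)) : ℕ)
          ≤ intervalSubmodule k (a x) (b x) ((i.succ : Fin (n+1)) : ℕ) := by
        simp only [intervalSubmodule, if_pos hx, if_pos hsa]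
        exact le_rfl
      rw [intervalStep, dif_pos hle]
      rfl
    · rw [H0 i.succ x hsa, map_zero]
      have h1 : intervalSubmodule k (a x) (b x) ((i.castSucc : Fin (n+1)) : ℕ) = ⊤ := by
        simp only [intervalSubmodule, if_pos hx]
      have h2 : intervalSubmodule k (a x) (b x) ((i.succ : Fin (n+1)) : ℕ) = ⊥ := by
        simp only [intervalSubmodule, if_neg hsa]
      have hnle : ¬ (intervalSubmodule k (a x) (b x) ((i.castSucc : Fin (n+1)) : ℕ)
          ≤ intervalSubmodule k (a x) (b x) ((i.succ : Fin (n+1)) : ℕ)) := by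
        rw [h1, h2]
        intro hcontr
        exact one_ne_zero ((Submodule.mem_bot k).1 (hcontr Submodule.mem_top))
      rw [intervalStep, dif_neg hnle]
      rw [LinearMap.zero_apply, map_zero]
  exact LinearMap.congr_fun hmaps q
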